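/- Let V be a vertex operator algebra of CFT-type and let X be a set of homogeneous representatives of a spanning set of V/C_1(V). Then V is spanned by elements u^{(1)}_{n_1} ⋯ u^{(r)}_{n_r} 1 with r ∈ ℕ, u^{(i)} ∈ X, and n_1 ≤ n_2 ≤ ⋯ ≤ n_r < 0 (a difference-zero condition on the indices). -/

import Mathlib

open scoped BigOperators

namespace VOAPaper

/-- Integer binomial coefficient `C(m, i)` for `m : ℤ`, `i : ℕ`. -/
def zchoose (m : ℤ) (i : ℕ) : ℤ :=
  if 0 ≤ m then ((m.toNat).choose i : ℤ)
  else (-1) ^ i * ((((i : ℤ) - m - 1).toNat).choose i : ℤ)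

variable (V : Type) [AddCommGroup V] [Module ℂ V]

/-- A vertex algebra structure on `V`: modes `u_n`, vacuum, truncation,
vacuum/creation axioms, and the Borcherds (Jacobi) identity. -/
structure VertexAlg where
  mode : V →ₗ[ℂ] ℤ → Module.End ℂ V
  vac : V
  trunc : ∀ u w : V, ∃ N : ℤ, ∀ n : ℤ, N ≤ n → mode u n w = 0
  vac_mode : ∀ (n : ℤ) (w : V), mode vac n w = if n = -1 then w else 0
  creation_neg_one : ∀ u : V, mode u (-1) vac = u
  creation_nonneg : ∀ (u : V) (n : ℤ), 0 ≤ n → mode u n vac = 0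
  borcherds : ∀ (u v w : V) (p q m : ℤ),
    (∑ᶠ i : ℕ, zchoose m i • mode (mode u (p + i) v) (m + q - i) w) =
    (∑ᶠ i : ℕ, ((-1 : ℤ) ^ i * zchoose p i) •
      (mode u (p + m - i) (mode v (q + i) w)
        - (p.negOnePow : ℤ) • mode v (p + q - i) (mode u (m + i) w)))

/-- A vertex operator algebra of CFT-type: a vertex algebra with conformal
vector `ω`, central charge `c`, an `L(0)`-grading `V = ⊕_{n ≥ 0} V_n` with
`V_0 = ℂ 1`, Virasoro relations, and the `L(-1)`-derivation property. -/
structure VOA extends VertexAlg V where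
  ω : V
  c : ℂ
  grading : ℤ → Submodule ℂ V
  internal : DirectSum.IsInternal grading
  neg_bot : ∀ n : ℤ, n < 0 → grading n = ⊥
  L0_eigen : ∀ (n : ℤ) (v : V), v ∈ grading n → mode ω 1 v = (n : ℂ) • v
  vac_grade : vac ∈ grading 0
  cft : grading 0 = Submodule.span ℂ {vac}
  ω_grade : ω ∈ grading 2
  virasoro : ∀ m n : ℤ,
    mode ω (m + 1) * mode ω (n + 1) - mode ω (n + 1) * mode ω (m + 1)
      = (m - n) • mode ω (m + n + 1)
        + (if m + n = 0 then ((m ^ 3 - m : ℂ) / 12) * c else 0) • (1 : Module.End ℂ V)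
  Lneg1_deriv : ∀ (u : V) (n : ℤ), mode (mode ω 0 u) n = (-n) • mode u (n - 1)

/-- A weak module for (the underlying vertex algebra of) `V`. -/
structure WeakMod (A : VertexAlg V) (M : Type) [AddCommGroup M] [Module ℂ M] where
  mmode : V →ₗ[ℂ] ℤ → Module.End ℂ M
  trunc : ∀ (v : V) (w : M), ∃ N : ℤ, ∀ n : ℤ, N ≤ n → mmode v n w = 0
  vac_mode : ∀ (n : ℤ) (w : M), mmode A.vac n w = if n = -1 then w else 0
  borcherds : ∀ (u v : V) (w : M) (p q m : ℤ),
    (∑ᶠ i : ℕ, zchoose m i • mmode (A.mode u (p + i) v) (m + q - i) w) =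
    (∑ᶠ i : ℕ, ((-1 : ℤ) ^ i * zchoose p i) •
      (mmode u (p + m - i) (mmode v (q + i) w)
        - (p.negOnePow : ℤ) • mmode v (p + q - i) (mmode u (m + i) w)))

/-- An ℕ-gradable weak module: a weak module with a compatible
lower-truncated grading `M = ⊕_{n ≥ 0} M(n)`. -/
structure NGradedMod (W : VOA V) (M : Type) [AddCommGroup M] [Module ℂ M]
    extends WeakMod V W.toVertexAlg M where
  mgrading : ℤ → Submodule ℂ M
  internal : DirectSum.IsInternal mgrading
  neg_bot : ∀ n : ℤ, n < 0 → mgrading n = ⊥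
  compat : ∀ (r : ℤ) (v : V), v ∈ W.grading r → ∀ (m n : ℤ), ∀ w ∈ mgrading n,
    mmode v m w ∈ mgrading (n + r - m - 1)

/-- Iterated application of modes: `applyModes [(u¹,n₁),…,(uʳ,nᵣ)] w = u¹_{n₁} ⋯ uʳ_{nᵣ} w`. -/
def applyModes (A : VertexAlg V) : List (V × ℤ) → V → V
  | [], w => w
  | p :: L, w => A.mode p.1 p.2 (applyModes A L w)

/-- Iterated application of module modes. -/
def applyModesM {M : Type} [AddCommGroup M] [Module ℂ M] {A : VertexAlg V}
    (Mod : WeakMod V A M) : List (V × ℤ) → M → M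
  | [], w => w
  | p :: L, w => Mod.mmode p.1 p.2 (applyModesM Mod L w)

/-- The subspace `C_n(V) = span{ u_{-n} v }`. -/
def Cspace (A : VertexAlg V) (n : ℕ) : Submodule ℂ V :=
  Submodule.span ℂ { x | ∃ u v : V, x = A.mode u (-(n : ℤ)) v }

/-- The subspace `C_1(V) = span{ u_{-1} v, L(-1)u : u, v ∈ V_+ }`. -/
def C1space (W : VOA V) : Submodule ℂ V :=
  Submodule.span ℂ
    ({ x | ∃ u v : V, (∃ r : ℤ, 0 < r ∧ u ∈ W.grading r) ∧
        (∃ r : ℤ, 0 < r ∧ v ∈ W.grading r) ∧ x = W.mode u (-1) v }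
      ∪ { x | ∃ u : V, (∃ r : ℤ, 0 < r ∧ u ∈ W.grading r) ∧ x = W.mode W.ω 0 u })

/-- A submodule invariant under all modes. -/
def Invariant {M : Type} [AddCommGroup M] [Module ℂ M] {A : VertexAlg V}
    (Mod : WeakMod V A M) (N : Submodule ℂ M) : Prop :=
  ∀ (v : V) (n : ℤ), ∀ w ∈ N, Mod.mmode v n w ∈ N

/-- Irreducibility of a weak module. -/
def IsIrreducibleMod {M : Type} [AddCommGroup M] [Module ℂ M] {A : VertexAlg V}
    (Mod : WeakMod V A M) : Prop :=
  (⊤ : Submodule ℂ M) ≠ ⊥ ∧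
    ∀ N : Submodule ℂ M, Invariant V Mod N → N = ⊥ ∨ N = ⊤

/-! ### Auxiliary development for `stmt8` -/

section Aux

variable {V}

lemma zchoose_zero_left (i : ℕ) : zchoose 0 i = if i = 0 then 1 else 0 := by
  cases i with
  | zero => simp [zchoose]
  | succ k => simp [zchoose, Nat.choose_eq_zero_of_lt (Nat.succ_pos k)]

lemma zchoose_one_left (i : ℕ) : zchoose 1 i = if i ≤ 1 then 1 else 0 := by
  match i with
  | 0 => simp [zchoose]
  | 1 => simp [zchoose]
  | (k+2) => simp [zchoose, Nat.choose_eq_zero_of_lt (by omega : (1:ℕ) < k + 2)]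

lemma zchoose_neg_one (i : ℕ) : zchoose (-1) i = (-1) ^ i := by
  have h : ((i : ℤ) - (-1) - 1).toNat = i := by omega
  simp [zchoose, h]

lemma lin_map_finsum (f : V →ₗ[ℂ] V) (g : ℕ → V) (h : (Function.support g).Finite) :
    f (∑ᶠ i, g i) = ∑ᶠ i, f (g i) :=
  f.toAddMonoidHom.map_finsum h

lemma finsum_mem_submodule {M : Type} [AddCommGroup M] [Module ℂ M]
    (p : Submodule ℂ M) (f : ℕ → M) (h : ∀ i, f i ∈ p) : (∑ᶠ i, f i) ∈ p := by
  by_cases hf : (Function.support f).Finite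
  · rw [finsum_eq_sum f hf]
    exact Submodule.sum_mem _ fun i _ => h i
  · rw [finsum_of_infinite_support hf]
    exact p.zero_mem

lemma support_fin {M : Type} [AddCommGroup M] (f : ℕ → M) (B : ℤ)
    (h : ∀ i : ℕ, B ≤ (i : ℤ) → f i = 0) : (Function.support f).Finite := by
  apply Set.Finite.subset (Set.finite_Iio B.toNat)
  intro i hi
  simp only [Set.mem_Iio]
  by_contra hge
  push_neg at hge
  exact hi (h i (by omega))

lemma mode_zero (A : VertexAlg V) (n : ℤ) (w : V) : A.mode 0 n w = 0 := by
  have : A.mode 0 = 0 := map_zero A.mode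
  rw [this]; rfl

lemma mode_smul (A : VertexAlg V) (c : ℂ) (u : V) (n : ℤ) (w : V) :
    A.mode (c • u) n w = c • A.mode u n w := by
  have : A.mode (c • u) = c • A.mode u := map_smul A.mode c u
  rw [this]; rfl

lemma mode_add (A : VertexAlg V) (u v : V) (n : ℤ) (w : V) :
    A.mode (u + v) n w = A.mode u n w + A.mode v n w := by
  have : A.mode (u + v) = A.mode u + A.mode v := map_add A.mode u v
  rw [this]; rfl

lemma finsum_smul_delta {M : Type} [AddCommGroup M] (c : ℕ → ℤ) (v : ℕ → M)
    (h0 : c 0 = 1) (h : ∀ i, i ≠ 0 → c i = 0) : (∑ᶠ i, c i • v i) = v 0 := by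
  rw [finsum_eq_single _ 0 (fun i hi => by rw [h i hi, zero_smul])]
  rw [h0, one_smul]

/-- Commutator formula: specialization of Borcherds at `p = 0`. -/
lemma commutator (A : VertexAlg V) (u v w : V) (m q : ℤ) :
    A.mode u m (A.mode v q w) = A.mode v q (A.mode u m w)
      + ∑ᶠ i : ℕ, zchoose m i • A.mode (A.mode u (i : ℤ) v) (m + q - (i : ℤ)) w := by
  have h := A.borcherds u v w 0 q m
  have hr := finsum_smul_delta (fun i => (-1 : ℤ) ^ i * zchoose 0 i)
    (fun i => A.mode u (0 + m - (i : ℤ)) (A.mode v (q + (i : ℤ)) w)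
      - ((0 : ℤ).negOnePow : ℤ) • A.mode v (0 + q - (i : ℤ)) (A.mode u (m + (i : ℤ)) w))
    (by simp [zchoose_zero_left]) (fun i hi => by simp [zchoose_zero_left, hi])
  rw [hr] at h
  simp only [Nat.cast_zero, Int.negOnePow_zero, add_zero, sub_zero, zero_add, zero_sub,
    Units.val_one, one_smul] at h
  rw [h]
  abel

/-- Iterate formula: specialization of Borcherds at `m = 0`. -/
lemma iterate_formula (A : VertexAlg V) (u v w : V) (p q : ℤ) :
    A.mode (A.mode u p v) q w = ∑ᶠ i : ℕ, ((-1 : ℤ) ^ i * zchoose p i) •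
      (A.mode u (p - (i : ℤ)) (A.mode v (q + (i : ℤ)) w)
        - (p.negOnePow : ℤ) • A.mode v (p + q - (i : ℤ)) (A.mode u (i : ℤ) w)) := by
  have h := A.borcherds u v w p q 0
  have hl := finsum_smul_delta (fun i => zchoose 0 i)
    (fun i => A.mode (A.mode u (p + (i : ℤ)) v) (0 + q - (i : ℤ)) w)
    (by simp [zchoose_zero_left]) (fun i hi => by simp [zchoose_zero_left, hi])
  rw [hl] at h
  simp only [Nat.cast_zero, add_zero, sub_zero, zero_add, zero_sub] at h
  rw [h]

/-- Iterate formula at `p = -1`. -/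
lemma iterate_neg_one (A : VertexAlg V) (u v w : V) (q : ℤ) :
    A.mode (A.mode u (-1) v) q w = ∑ᶠ i : ℕ,
      (A.mode u (-1 - (i : ℤ)) (A.mode v (q + (i : ℤ)) w)
        + A.mode v (-1 + q - (i : ℤ)) (A.mode u (i : ℤ) w)) := by
  rw [iterate_formula]
  apply finsum_congr
  intro i
  have h1 : ((-1 : ℤ) ^ i * zchoose (-1) i) = 1 := by
    rw [zchoose_neg_one, ← mul_pow]
    norm_num
  have h2 : ((Int.negOnePow (-1) : ℤ)) = -1 := by
    rw [show ((-1 : ℤ)) = -(1 : ℤ) from rfl, Int.negOnePow_neg, Int.negOnePow_one]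
    rfl
  rw [h1, h2, one_smul]
  rw [neg_smul, one_smul, sub_neg_eq_add]


lemma grading_ne_disjoint (W : VOA V) {i j : ℤ} (hij : j ≠ i) {x : V}
    (hi : x ∈ W.grading i) (hj : x ∈ W.grading j) : x = 0 := by
  have hle : W.grading j ≤ ⨆ (k) (_ : k ≠ i), W.grading k :=
    le_iSup₂ (f := fun k (_ : k ≠ i) => W.grading k) j hij
  exact Submodule.disjoint_def.mp (W.internal.submodule_iSupIndep i) x hi (hle hj)

lemma mem_grading_of_eigen (W : VOA V) (N : ℤ) (x : V)
    (hx : W.mode W.ω 1 x = (N : ℂ) • x) : x ∈ W.grading N := by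
  have htop : x ∈ ⨆ j, W.grading j := by
    rw [W.internal.submodule_iSup_eq_top]; trivial
  rw [Submodule.mem_iSup_iff_exists_finsupp] at htop
  obtain ⟨f, hf, hsum⟩ := htop
  have key : ∑ k ∈ f.support, (((k : ℂ) - N) • f k) = 0 := by
    have h1 : W.mode W.ω 1 x = ∑ k ∈ f.support, (k : ℂ) • f k := by
      rw [← hsum, Finsupp.sum, map_sum]
      exact Finset.sum_congr rfl fun k _ => W.L0_eigen k (f k) (hf k)
    have h2 : (N : ℂ) • x = ∑ k ∈ f.support, (N : ℂ) • f k := by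
      rw [← hsum, Finsupp.sum, Finset.smul_sum]
    calc ∑ k ∈ f.support, (((k : ℂ) - N) • f k)
        = ∑ k ∈ f.support, ((k : ℂ) • f k - (N : ℂ) • f k) := by
          exact Finset.sum_congr rfl fun k _ => sub_smul _ _ _
      _ = (∑ k ∈ f.support, (k : ℂ) • f k) - ∑ k ∈ f.support, (N : ℂ) • f k :=
          Finset.sum_sub_distrib _ _
      _ = W.mode W.ω 1 x - (N : ℂ) • x := by rw [h1, h2]
      _ = 0 := by rw [hx, sub_self]
  have hzero : ∀ j, j ≠ N → f j = 0 := by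
    intro j hj
    by_contra hne
    have hjs : j ∈ f.support := Finsupp.mem_support_iff.mpr hne
    have hiso : ((j : ℂ) - N) • f j = - ∑ k ∈ f.support.erase j, (((k : ℂ) - N) • f k) := by
      rw [← Finset.add_sum_erase _ _ hjs] at key
      exact eq_neg_of_add_eq_zero_left key
    have hmem1 : ((j : ℂ) - N) • f j ∈ W.grading j := Submodule.smul_mem _ _ (hf j)
    have hmem2 : ((j : ℂ) - N) • f j ∈ ⨆ (k) (_ : k ≠ j), W.grading k := by
      rw [hiso]
      apply neg_mem
      apply Submodule.sum_mem
      intro k hk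
      have hkj : k ≠ j := Finset.ne_of_mem_erase hk
      exact (le_iSup₂ (f := fun k _ => W.grading k) k hkj :
        W.grading k ≤ _) (Submodule.smul_mem _ _ (hf k))
    have h0 : ((j : ℂ) - N) • f j = 0 :=
      Submodule.disjoint_def.mp (W.internal.submodule_iSupIndep j) _ hmem1 hmem2
    have hc : ((j : ℂ) - N) ≠ 0 := by
      rw [sub_ne_zero]
      exact_mod_cast hj
    exact hne ((smul_eq_zero.mp h0).resolve_left hc)
  have hxN : x = f N := by
    rw [← hsum, Finsupp.sum]
    rw [Finset.sum_eq_single N (fun b _ hb => hzero b hb)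
      (fun hN => Finsupp.notMem_support_iff.mp hN)]
  rw [hxN]
  exact hf N

lemma mode_mem_grading (W : VOA V) {u : V} {r : ℤ} (hu : u ∈ W.grading r)
    {w : V} {s : ℤ} (hw : w ∈ W.grading s) (m : ℤ) :
    W.mode u m w ∈ W.grading (s + r - m - 1) := by
  apply mem_grading_of_eigen
  have hc := commutator W.toVertexAlg W.ω u w 1 m
  have hsupp : ∀ i : ℕ, 2 ≤ i →
      zchoose 1 i • W.mode (W.mode W.ω (i : ℤ) u) (1 + m - (i : ℤ)) w = 0 := by
    intro i hi
    rw [zchoose_one_left, if_neg (by omega), zero_smul]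
  have hfin : (∑ᶠ i : ℕ, zchoose 1 i • W.mode (W.mode W.ω (i : ℤ) u) (1 + m - (i : ℤ)) w)
      = zchoose 1 0 • W.mode (W.mode W.ω ((0:ℕ) : ℤ) u) (1 + m - ((0:ℕ) : ℤ)) w
        + zchoose 1 1 • W.mode (W.mode W.ω ((1:ℕ) : ℤ) u) (1 + m - ((1:ℕ) : ℤ)) w := by
    rw [finsum_eq_finset_sum_of_support_subset _ (s := ({0, 1} : Finset ℕ)) (by
      intro i hi
      simp only [Function.mem_support] at hi
      by_contra hmem
      simp only [Finset.coe_insert, Finset.coe_singleton, Set.mem_insert_iff,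
        Set.mem_singleton_iff] at hmem
      push_neg at hmem
      exact hi (hsupp i (by omega)))]
    rw [Finset.sum_pair (by norm_num)]
  rw [hfin] at hc
  have e0 : W.mode (W.mode W.ω ((0:ℕ) : ℤ) u) (1 + m - ((0:ℕ) : ℤ)) w
      = (-(1 + m)) • W.mode u m w := by
    have := W.Lneg1_deriv u (1 + m)
    have h2 : (1 : ℤ) + m - 1 = m := by ring
    simp only [Nat.cast_zero, sub_zero]
    rw [this]
    rw [LinearMap.smul_apply]  -- may need adjusting
    rw [h2]
  have e1 : W.mode (W.mode W.ω ((1:ℕ) : ℤ) u) (1 + m - ((1:ℕ) : ℤ)) w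
      = (r : ℂ) • W.mode u m w := by
    have h1 : W.mode W.ω ((1:ℕ) : ℤ) u = (r : ℂ) • u := by
      simpa using W.L0_eigen r u hu
    have h2 : (1 : ℤ) + m - ((1:ℕ) : ℤ) = m := by push_cast; ring
    rw [h1, h2, mode_smul]
  have ew : W.mode u m (W.mode W.ω 1 w) = (s : ℂ) • W.mode u m w := by
    rw [W.L0_eigen s w hw, map_smul]
  rw [hc, e0, e1, ew]
  rw [zchoose_one_left, zchoose_one_left]
  norm_num
  have hz : ∀ (z : ℤ) (y : V), z • y = ((z : ℂ)) • y :=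
    fun z y => (Int.cast_smul_eq_zsmul ℂ z y).symm
  rw [hz]
  rw [← add_smul, ← add_smul]
  congr 1
  push_cast
  ring


lemma proj_span (W : VOA V) (G : Set V) (hG : ∀ g ∈ G, ∃ j : ℤ, g ∈ W.grading j)
    {r : ℤ} {a : V} (ha : a ∈ W.grading r) (haG : a ∈ Submodule.span ℂ G) :
    a ∈ Submodule.span ℂ {g | g ∈ G ∧ g ∈ W.grading r} := by
  set T := Submodule.span ℂ {g | g ∈ G ∧ g ∈ W.grading r} with hT
  have hTle : T ≤ W.grading r := Submodule.span_le.mpr (fun g hg => hg.2)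
  have hsub : Submodule.span ℂ G ≤ T ⊔ (⨆ (j) (_ : j ≠ r), W.grading j) := by
    apply Submodule.span_le.mpr
    intro g hg
    by_cases hgr : g ∈ W.grading r
    · exact Submodule.mem_sup_left (Submodule.subset_span ⟨hg, hgr⟩)
    · obtain ⟨j, hj⟩ := hG g hg
      have hjr : j ≠ r := fun h => hgr (h ▸ hj)
      exact Submodule.mem_sup_right
        ((le_iSup₂ (f := fun k (_ : k ≠ r) => W.grading k) j hjr) hj)
  obtain ⟨t, ht, z, hz, hazt⟩ := Submodule.mem_sup.mp (hsub haG)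
  have hzr : z ∈ W.grading r := by
    have h1 : a - t ∈ W.grading r := Submodule.sub_mem _ ha (hTle ht)
    have h2 : a - t = z := by rw [← hazt]; abel
    rwa [h2] at h1
  have hz0 : z = 0 :=
    Submodule.disjoint_def.mp (W.internal.submodule_iSupIndep r) z hzr hz
  rw [← hazt, hz0, add_zero]
  exact ht

lemma span_X_sup_C1 (W : VOA V) (X : Set V)
    (hspan : Submodule.span ℂ ((C1space V W).mkQ '' X) = ⊤) :
    Submodule.span ℂ X ⊔ C1space V W = ⊤ := by
  have h1 : Submodule.map (C1space V W).mkQ (Submodule.span ℂ X) = ⊤ := by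
    rw [Submodule.map_span]; exact hspan
  have h2 := congrArg (Submodule.comap (C1space V W).mkQ) h1
  rwa [Submodule.comap_map_eq, Submodule.ker_mkQ, Submodule.comap_top] at h2

/-- Composition of modes as a linear endomorphism. -/
def opOf (A : VertexAlg V) : List (V × ℤ) → Module.End ℂ V
  | [] => LinearMap.id
  | p :: L => A.mode p.1 p.2 ∘ₗ opOf A L

lemma opOf_nil (A : VertexAlg V) : opOf A [] = LinearMap.id := rfl

lemma opOf_cons (A : VertexAlg V) (p : V × ℤ) (L : List (V × ℤ)) :
    opOf A (p :: L) = A.mode p.1 p.2 ∘ₗ opOf A L := rfl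

lemma opOf_apply_eq (A : VertexAlg V) (L : List (V × ℤ)) (w : V) :
    opOf A L w = applyModes V A L w := by
  induction L with
  | nil => rfl
  | cons p L ih => simp [opOf_cons, applyModes, ih]

lemma opOf_append (A : VertexAlg V) (L1 L2 : List (V × ℤ)) :
    opOf A (L1 ++ L2) = opOf A L1 ∘ₗ opOf A L2 := by
  induction L1 with
  | nil => simp [opOf_nil]
  | cons p L ih => simp [opOf_cons, ih, LinearMap.comp_assoc]

/-- The value of a labelled list of modes applied to the vacuum. -/
def valOf (A : VertexAlg V) (L : List ((V × ℤ) × ℕ)) : V :=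
  opOf A (L.map (·.1)) A.vac

lemma valOf_decomp (A : VertexAlg V) (p t : List ((V × ℤ) × ℕ)) (e : (V × ℤ) × ℕ) :
    valOf A (p ++ e :: t) = opOf A (p.map (·.1)) (A.mode e.1.1 e.1.2 (valOf A t)) := by
  simp only [valOf, List.map_append, List.map_cons, opOf_append, opOf_cons]
  rfl

lemma valOf_decomp2 (A : VertexAlg V) (p t : List ((V × ℤ) × ℕ)) (e1 e2 : (V × ℤ) × ℕ) :
    valOf A (p ++ e1 :: e2 :: t)
      = opOf A (p.map (·.1)) (A.mode e1.1.1 e1.1.2 (A.mode e2.1.1 e2.1.2 (valOf A t))) := by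
  simp only [valOf, List.map_append, List.map_cons, opOf_append, opOf_cons]
  rfl

/-- Mode application as a linear map in the state variable. -/
def modeAt (A : VertexAlg V) (n : ℤ) (w : V) : V →ₗ[ℂ] V where
  toFun := fun y => A.mode y n w
  map_add' := fun y z => by exact mode_add A y z n w
  map_smul' := fun c y => by simp only [RingHom.id_apply]; exact mode_smul A c y n w

/-- Measures. -/
def wtSum (L : List ((V × ℤ) × ℕ)) : ℕ := (L.map (·.2)).sum

def sqSum (L : List ((V × ℤ) × ℕ)) : ℕ := (L.map (fun e => e.2 * e.2)).sum

open Classical in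
noncomputable def cntX (X : Set V) (L : List ((V × ℤ) × ℕ)) : ℕ :=
  L.countP (fun e => decide (e.1.1 ∉ X))

def invM : List ℤ → ℕ
  | [] => 0
  | x :: xs => xs.countP (fun y => decide (y < x)) + invM xs

def invOf (L : List ((V × ℤ) × ℕ)) : ℕ := invM (L.map (·.1.2))

lemma countP_swap {α : Type*} (pr : α → Bool) (t l : List α) (x y : α) :
    List.countP pr (t ++ x :: y :: l) = List.countP pr (t ++ y :: x :: l) := by
  simp only [List.countP_append, List.countP_cons]
  omega

lemma invM_cons (x : ℤ) (xs : List ℤ) :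
    invM (x :: xs) = xs.countP (fun y => decide (y < x)) + invM xs := rfl

lemma invM_swap (x y : ℤ) (h : y < x) :
    ∀ (p l : List ℤ), invM (p ++ y :: x :: l) < invM (p ++ x :: y :: l) := by
  intro p
  induction p with
  | nil =>
    intro l
    have h1 : (decide (x < y)) = false := decide_eq_false (not_lt.mpr h.le)
    have h2 : (decide (y < x)) = true := decide_eq_true h
    simp only [List.nil_append, invM_cons, List.countP_cons, h1, h2]
    simp only [Bool.false_eq_true, if_false, if_true]
    omega
  | cons a p ih =>
    intro l
    simp only [List.cons_append, invM_cons]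
    rw [countP_swap (fun z => decide (z < a)) p l y x]
    exact Nat.add_lt_add_left (ih l) _

lemma adj_or_chain {α : Type*} (f : α → ℤ) :
    ∀ l : List α, (∃ p x y t, l = p ++ x :: y :: t ∧ f y < f x)
      ∨ (l.map f).Chain' (· ≤ ·) := by
  intro l
  induction l with
  | nil => right; exact List.isChain_nil
  | cons a l ih =>
    cases l with
    | nil => right; exact List.isChain_singleton _
    | cons b t =>
      by_cases hab : f b < f a
      · left; exact ⟨[], a, b, t, rfl, hab⟩
      · rcases ih with ⟨p, x, y, t', heq, hyx⟩ | hch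
        · left
          exact ⟨a :: p, x, y, t', by rw [List.cons_append, ← heq], hyx⟩
        · right
          simp only [List.map_cons] at hch ⊢
          exact List.isChain_cons_cons.mpr ⟨not_lt.mp hab, hch⟩

/-- The index-ordered spanning set. -/
def SSet (W : VOA V) (X : Set V) : Set V :=
  { x | ∃ L : List (V × ℤ),
      (∀ p ∈ L, p.1 ∈ X) ∧
      L.Chain' (fun p q => p.2 ≤ q.2) ∧
      (∀ p ∈ L, p.2 < 0) ∧
      x = applyModes V W.toVertexAlg L W.vac }

theorem main_span (W : VOA V) (X : Set V)
    (hhom : ∀ u ∈ X, ∃ j : ℤ, u ∈ W.grading j)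
    (hTop : Submodule.span ℂ X ⊔ C1space V W = ⊤) :
    ∀ (a5 : ℕ) (b5 : ℕ) (c5 : ℕ) (d5 : ℕ) (e5 : ℕ) (L : List ((V × ℤ) × ℕ)),
      (∀ e ∈ L, e.1.1 ∈ W.grading (e.2 : ℤ)) →
      wtSum L ≤ a5 → sqSum L ≤ b5 → cntX X L ≤ c5 → L.length ≤ d5 → invOf L ≤ e5 →
      valOf W.toVertexAlg L ∈ Submodule.span ℂ (SSet W X) := by
  classical
  intro a5
  induction a5 using Nat.strong_induction_on with | _ a5 ihW => ?_
  intro b5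
  induction b5 using Nat.strong_induction_on with | _ b5 ihQ => ?_
  intro c5
  induction c5 using Nat.strong_induction_on with | _ c5 ihN => ?_
  intro d5
  induction d5 using Nat.strong_induction_on with | _ d5 ihK => ?_
  intro e5
  induction e5 using Nat.strong_induction_on with | _ e5 ihI => ?_
  intro L hg h1 h2 h3 h4 h5
  by_cases h0 : ∃ p e t, L = p ++ e :: t ∧ e.2 = 0
  · obtain ⟨p, e, t, rfl, her⟩ := h0
    have hae : e.1.1 ∈ W.grading 0 := by
      have := hg e (by simp)
      rwa [her, Nat.cast_zero] at this
    rw [W.cft] at hae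
    obtain ⟨c, hc⟩ := Submodule.mem_span_singleton.mp hae
    rw [valOf_decomp, ← hc, mode_smul, VertexAlg.vac_mode, map_smul]
    by_cases hn : e.1.2 = -1
    · rw [if_pos hn]
      have hre : opOf W.toVertexAlg (List.map (·.1) p) (valOf W.toVertexAlg t)
          = valOf W.toVertexAlg (p ++ t) := by
        simp only [valOf, List.map_append, opOf_append]
        rfl
      rw [hre]
      apply Submodule.smul_mem
      refine ihK (p ++ t).length ?_ (invOf (p ++ t)) (p ++ t) ?_ ?_ ?_ ?_ le_rfl le_rfl
      · have hl := h4
        simp only [List.length_append, List.length_cons] at hl ⊢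
        omega
      · intro x hx
        refine hg x ?_
        simp only [List.mem_append, List.mem_cons] at hx ⊢
        tauto
      · have hw := h1
        simp only [wtSum, List.map_append, List.map_cons, List.sum_append,
          List.sum_cons] at hw ⊢
        omega
      · have hs := h2
        simp only [sqSum, List.map_append, List.map_cons, List.sum_append,
          List.sum_cons] at hs ⊢
        omega
      · have hcx := h3
        simp only [cntX, List.countP_append, List.countP_cons] at hcx ⊢
        omega
    · rw [if_neg hn, map_zero, smul_zero]
      exact Submodule.zero_mem _
  · by_cases h1x : ∃ p e t, L = p ++ e :: t ∧ e.1.1 ∉ X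
    · obtain ⟨p, e, t, rfl, heX⟩ := h1x
      have hae : e.1.1 ∈ W.grading ((e.2 : ℕ) : ℤ) := hg e (by simp)
      set S1 : Set V := { x | ∃ u v : V, (∃ r : ℤ, 0 < r ∧ u ∈ W.grading r) ∧
          (∃ r : ℤ, 0 < r ∧ v ∈ W.grading r) ∧ x = W.mode u (-1) v } with hS1
      set S2 : Set V := { x | ∃ u : V, (∃ r : ℤ, 0 < r ∧ u ∈ W.grading r) ∧
          x = W.mode W.ω 0 u } with hS2
      have hC1 : C1space V W = Submodule.span ℂ (S1 ∪ S2) := rfl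
      have hGtop : Submodule.span ℂ (X ∪ (S1 ∪ S2)) = ⊤ := by
        rw [Submodule.span_union, ← hC1, hTop]
      have hGhom : ∀ g ∈ X ∪ (S1 ∪ S2), ∃ j : ℤ, g ∈ W.grading j := by
        rintro g (hgX | hgS1 | hgS2)
        · exact hhom g hgX
        · obtain ⟨u, v, ⟨ru, _, hu⟩, ⟨rv, _, hv⟩, rfl⟩ := hgS1
          exact ⟨rv + ru - (-1) - 1, mode_mem_grading W hu hv (-1)⟩
        · obtain ⟨u, ⟨ru, _, hu⟩, rfl⟩ := hgS2
          exact ⟨ru + 2 - 0 - 1, mode_mem_grading W W.ω_grade hu 0⟩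
      have haspan : e.1.1 ∈ Submodule.span ℂ
          {g | g ∈ X ∪ (S1 ∪ S2) ∧ g ∈ W.grading ((e.2 : ℕ) : ℤ)} :=
        proj_span W _ hGhom hae (by rw [hGtop]; trivial)
      set Φ : V →ₗ[ℂ] V :=
        (opOf W.toVertexAlg (p.map (·.1))) ∘ₗ
          (modeAt W.toVertexAlg e.1.2 (valOf W.toVertexAlg t)) with hPhi
      have hval : valOf W.toVertexAlg (p ++ e :: t) = Φ e.1.1 := by
        rw [hPhi, valOf_decomp]; rfl
      rw [hval]
      have hsuff : Submodule.span ℂ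
          {g | g ∈ X ∪ (S1 ∪ S2) ∧ g ∈ W.grading ((e.2 : ℕ) : ℤ)} ≤
          Submodule.comap Φ (Submodule.span ℂ (SSet W X)) := by
        apply Submodule.span_le.mpr
        rintro g ⟨hgG, hgr⟩
        simp only [SetLike.mem_coe, Submodule.mem_comap]
        rcases hgG with hgX | hgS1 | hgS2
        · -- generator in X
          have hrepr : Φ g = valOf W.toVertexAlg (p ++ ((g, e.1.2), e.2) :: t) := by
            rw [hPhi, valOf_decomp]; rfl
          rw [hrepr]
          refine ihN (cntX X (p ++ ((g, e.1.2), e.2) :: t)) ?_ _ _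
            (p ++ ((g, e.1.2), e.2) :: t) ?_ ?_ ?_ le_rfl le_rfl le_rfl
          · have hd1 : (decide (g ∉ X)) = false := decide_eq_false (by simp [hgX])
            have hd2 : (decide (e.1.1 ∉ X)) = true := decide_eq_true heX
            have hcx := h3
            simp only [cntX, List.countP_append, List.countP_cons, hd1, hd2] at hcx ⊢
            simp only [Bool.false_eq_true, if_false, if_true] at hcx ⊢
            omega
          · intro x hx
            simp only [List.mem_append, List.mem_cons] at hx
            rcases hx with hx | hx | hx
            · exact hg x (by simp [hx])
            · rw [hx]; exact hgr
            · exact hg x (by simp [hx])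
          · have hw := h1
            simp only [wtSum, List.map_append, List.map_cons, List.sum_append,
              List.sum_cons] at hw ⊢
            omega
          · have hs := h2
            simp only [sqSum, List.map_append, List.map_cons, List.sum_append,
              List.sum_cons] at hs ⊢
            omega
        · -- generator of type u_{-1} v
          obtain ⟨u, v, ⟨ru, hru, hu⟩, ⟨rv, hrv, hv⟩, rfl⟩ := hgS1
          by_cases hgz : W.mode u (-1) v = 0
          · rw [hgz, map_zero]; exact Submodule.zero_mem _
          have hgg : W.mode u (-1) v ∈ W.grading (rv + ru - (-1) - 1) :=
            mode_mem_grading W hu hv (-1)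
          have hreq : rv + ru - (-1) - 1 = ((e.2 : ℕ) : ℤ) := by
            by_contra hne
            exact hgz (grading_ne_disjoint W hne hgr hgg)
          have hrur : (ru.toNat : ℤ) = ru := Int.toNat_of_nonneg hru.le
          have hrvr : (rv.toNat : ℤ) = rv := Int.toNat_of_nonneg hrv.le
          have hsum : ru.toNat + rv.toNat = e.2 := by omega
          have hru1 : 1 ≤ ru.toNat := by omega
          have hrv1 : 1 ≤ rv.toNat := by omega
          have hPhig : Φ (W.mode u (-1) v) = opOf W.toVertexAlg (p.map (·.1))
              (W.mode (W.mode u (-1) v) e.1.2 (valOf W.toVertexAlg t)) := by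
            rw [hPhi]; rfl
          rw [hPhig, iterate_neg_one]
          obtain ⟨N1, hN1⟩ := W.trunc v (valOf W.toVertexAlg t)
          obtain ⟨N2, hN2⟩ := W.trunc u (valOf W.toVertexAlg t)
          have hfin : (Function.support (fun i : ℕ =>
              W.mode u (-1 - (i:ℤ)) (W.mode v (e.1.2 + (i:ℤ)) (valOf W.toVertexAlg t))
                + W.mode v (-1 + e.1.2 - (i:ℤ))
                  (W.mode u (i:ℤ) (valOf W.toVertexAlg t)))).Finite := by
            apply support_fin _ (max (N1 - e.1.2) N2)
            intro i hi
            rw [hN1 (e.1.2 + i) (by omega), hN2 i (by omega), map_zero, map_zero, add_zero]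
          rw [lin_map_finsum _ _ hfin]
          apply finsum_mem_submodule
          intro i
          rw [map_add]
          have hkey : ru.toNat * ru.toNat + rv.toNat * rv.toNat < e.2 * e.2 := by
            nlinarith [hsum, hru1, hrv1]
          apply add_mem
          · have hrepr : (opOf W.toVertexAlg (p.map (·.1)))
                (W.mode u (-1 - (i:ℤ)) (W.mode v (e.1.2 + (i:ℤ)) (valOf W.toVertexAlg t)))
                = valOf W.toVertexAlg
                  (p ++ ((u, -1 - (i:ℤ)), ru.toNat) :: ((v, e.1.2 + (i:ℤ)), rv.toNat) :: t) :=
              (valOf_decomp2 W.toVertexAlg p t ((u, -1 - (i:ℤ)), ru.toNat)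
                ((v, e.1.2 + (i:ℤ)), rv.toNat)).symm
            rw [hrepr]
            refine ihQ (sqSum (p ++ ((u, -1 - (i:ℤ)), ru.toNat) ::
                ((v, e.1.2 + (i:ℤ)), rv.toNat) :: t)) ?_ _ _ _ _ ?_ ?_ le_rfl le_rfl le_rfl le_rfl
            · have hs := h2
              simp only [sqSum, List.map_append, List.map_cons, List.sum_append,
                List.sum_cons] at hs ⊢
              omega
            · intro x hx
              simp only [List.mem_append, List.mem_cons] at hx
              rcases hx with hx | hx | hx | hx
              · exact hg x (by simp [hx])
              · rw [hx]; simpa only [hrur] using hu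
              · rw [hx]; simpa only [hrvr] using hv
              · exact hg x (by simp [hx])
            · have hw := h1
              simp only [wtSum, List.map_append, List.map_cons, List.sum_append,
                List.sum_cons] at hw ⊢
              omega
          · have hrepr : (opOf W.toVertexAlg (p.map (·.1)))
                (W.mode v (-1 + e.1.2 - (i:ℤ)) (W.mode u (i:ℤ) (valOf W.toVertexAlg t)))
                = valOf W.toVertexAlg
                  (p ++ ((v, -1 + e.1.2 - (i:ℤ)), rv.toNat) :: ((u, (i:ℤ)), ru.toNat) :: t) :=
              (valOf_decomp2 W.toVertexAlg p t ((v, -1 + e.1.2 - (i:ℤ)), rv.toNat)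
                ((u, (i:ℤ)), ru.toNat)).symm
            rw [hrepr]
            refine ihQ (sqSum (p ++ ((v, -1 + e.1.2 - (i:ℤ)), rv.toNat) ::
                ((u, (i:ℤ)), ru.toNat) :: t)) ?_ _ _ _ _ ?_ ?_ le_rfl le_rfl le_rfl le_rfl
            · have hs := h2
              simp only [sqSum, List.map_append, List.map_cons, List.sum_append,
                List.sum_cons] at hs ⊢
              omega
            · intro x hx
              simp only [List.mem_append, List.mem_cons] at hx
              rcases hx with hx | hx | hx | hx
              · exact hg x (by simp [hx])
              · rw [hx]; simpa only [hrvr] using hv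
              · rw [hx]; simpa only [hrur] using hu
              · exact hg x (by simp [hx])
            · have hw := h1
              simp only [wtSum, List.map_append, List.map_cons, List.sum_append,
                List.sum_cons] at hw ⊢
              omega
        · -- generator of type L(-1) u
          obtain ⟨u, ⟨ru, hru, hu⟩, rfl⟩ := hgS2
          by_cases hgz : W.mode W.ω 0 u = 0
          · rw [hgz, map_zero]; exact Submodule.zero_mem _
          have hgg : W.mode W.ω 0 u ∈ W.grading (ru + 2 - 0 - 1) :=
            mode_mem_grading W W.ω_grade hu 0
          have hreq : ru + 2 - 0 - 1 = ((e.2 : ℕ) : ℤ) := by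
            by_contra hne
            exact hgz (grading_ne_disjoint W hne hgr hgg)
          have hrur : (ru.toNat : ℤ) = ru := Int.toNat_of_nonneg hru.le
          have hPhig : Φ (W.mode W.ω 0 u) = opOf W.toVertexAlg (p.map (·.1))
              (W.mode (W.mode W.ω 0 u) e.1.2 (valOf W.toVertexAlg t)) := by
            rw [hPhi]; rfl
          rw [hPhig, W.Lneg1_deriv u e.1.2, LinearMap.smul_apply, map_zsmul]
          apply zsmul_mem
          have hrepr : (opOf W.toVertexAlg (p.map (·.1)))
              (W.mode u (e.1.2 - 1) (valOf W.toVertexAlg t))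
              = valOf W.toVertexAlg (p ++ ((u, e.1.2 - 1), ru.toNat) :: t) :=
            (valOf_decomp W.toVertexAlg p t ((u, e.1.2 - 1), ru.toNat)).symm
          rw [hrepr]
          refine ihW (wtSum (p ++ ((u, e.1.2 - 1), ru.toNat) :: t)) ?_ _ _ _ _
            (p ++ ((u, e.1.2 - 1), ru.toNat) :: t) ?_ le_rfl le_rfl le_rfl le_rfl le_rfl
          · have hw := h1
            simp only [wtSum, List.map_append, List.map_cons, List.sum_append,
              List.sum_cons] at hw ⊢
            omega
          · intro x hx
            simp only [List.mem_append, List.mem_cons] at hx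
            rcases hx with hx | hx | hx
            · exact hg x (by simp [hx])
            · rw [hx]; simpa only [hrur] using hu
            · exact hg x (by simp [hx])
      exact hsuff haspan
    · have hallX : ∀ x ∈ L, x.1.1 ∈ X := by
        intro x hx
        by_contra hxX
        obtain ⟨s1, t1, rfl⟩ := List.append_of_mem hx
        exact h1x ⟨s1, x, t1, rfl, hxX⟩
      by_cases hadj : ∃ p e1 e2 t, L = p ++ e1 :: e2 :: t ∧ e2.1.2 < e1.1.2
      · obtain ⟨p, e1, e2, t, rfl, hlt⟩ := hadj
        rw [valOf_decomp2,
          commutator W.toVertexAlg e1.1.1 e2.1.1 (valOf W.toVertexAlg t) e1.1.2 e2.1.2,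
          map_add]
        apply add_mem
        · have hrepr : (opOf W.toVertexAlg (p.map (·.1)))
              (W.mode e2.1.1 e2.1.2 (W.mode e1.1.1 e1.1.2 (valOf W.toVertexAlg t)))
              = valOf W.toVertexAlg (p ++ e2 :: e1 :: t) :=
            (valOf_decomp2 W.toVertexAlg p t e2 e1).symm
          rw [hrepr]
          refine ihI (invOf (p ++ e2 :: e1 :: t)) ?_ (p ++ e2 :: e1 :: t) ?_ ?_ ?_ ?_ ?_ le_rfl
          · have hswap : invOf (p ++ e2 :: e1 :: t) < invOf (p ++ e1 :: e2 :: t) := by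
              simp only [invOf, List.map_append, List.map_cons]
              exact invM_swap e1.1.2 e2.1.2 hlt (p.map (·.1.2)) (t.map (·.1.2))
            exact lt_of_lt_of_le hswap h5
          · intro x hx
            refine hg x ?_
            simp only [List.mem_append, List.mem_cons] at hx ⊢
            tauto
          · have hw := h1
            simp only [wtSum, List.map_append, List.map_cons, List.sum_append,
              List.sum_cons] at hw ⊢
            omega
          · have hs := h2
            simp only [sqSum, List.map_append, List.map_cons, List.sum_append,
              List.sum_cons] at hs ⊢
            omega
          · have hcx := h3
            simp only [cntX, List.countP_append, List.countP_cons] at hcx ⊢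
            omega
          · have hl := h4
            simp only [List.length_append, List.length_cons] at hl ⊢
            omega
        · obtain ⟨NB, hNB⟩ := W.trunc e1.1.1 e2.1.1
          have hfin : (Function.support (fun i : ℕ => zchoose e1.1.2 i •
              W.mode (W.mode e1.1.1 (i:ℤ) e2.1.1) (e1.1.2 + e2.1.2 - (i:ℤ))
                (valOf W.toVertexAlg t))).Finite := by
            apply support_fin _ NB
            intro i hi
            rw [hNB i hi,
              show W.mode (0:V) (e1.1.2 + e2.1.2 - (i:ℤ)) (valOf W.toVertexAlg t) = 0 from
                mode_zero _ _ _,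
              smul_zero]
          rw [lin_map_finsum _ _ hfin]
          apply finsum_mem_submodule
          intro i
          rw [map_zsmul]
          apply zsmul_mem
          by_cases hbz : W.mode e1.1.1 (i:ℤ) e2.1.1 = 0
          · rw [hbz,
              show W.mode (0:V) (e1.1.2 + e2.1.2 - (i:ℤ)) (valOf W.toVertexAlg t) = 0 from
                mode_zero _ _ _,
              map_zero]
            exact Submodule.zero_mem _
          · have hb : W.mode e1.1.1 (i:ℤ) e2.1.1
                ∈ W.grading ((e2.2:ℤ) + (e1.2:ℤ) - (i:ℤ) - 1) :=
              mode_mem_grading W (hg e1 (by simp)) (hg e2 (by simp)) (i:ℤ)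
            have hnn : 0 ≤ (e2.2:ℤ) + (e1.2:ℤ) - (i:ℤ) - 1 := by
              by_contra hneg
              push_neg at hneg
              rw [W.neg_bot _ hneg] at hb
              exact hbz ((Submodule.mem_bot ℂ).mp hb)
            have htN : ((((e2.2:ℤ) + (e1.2:ℤ) - (i:ℤ) - 1).toNat : ℕ) : ℤ)
                = (e2.2:ℤ) + (e1.2:ℤ) - (i:ℤ) - 1 := Int.toNat_of_nonneg hnn
            have hrepr : (opOf W.toVertexAlg (p.map (·.1)))
                (W.mode (W.mode e1.1.1 (i:ℤ) e2.1.1) (e1.1.2 + e2.1.2 - (i:ℤ))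
                  (valOf W.toVertexAlg t))
                = valOf W.toVertexAlg (p ++ ((W.mode e1.1.1 (i:ℤ) e2.1.1,
                    e1.1.2 + e2.1.2 - (i:ℤ)), ((e2.2:ℤ) + (e1.2:ℤ) - (i:ℤ) - 1).toNat) :: t) :=
              (valOf_decomp W.toVertexAlg p t ((W.mode e1.1.1 (i:ℤ) e2.1.1,
                e1.1.2 + e2.1.2 - (i:ℤ)), ((e2.2:ℤ) + (e1.2:ℤ) - (i:ℤ) - 1).toNat)).symm
            rw [hrepr]
            refine ihW _ ?_ _ _ _ _ _ ?_ le_rfl le_rfl le_rfl le_rfl le_rfl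
            · have hw := h1
              simp only [wtSum, List.map_append, List.map_cons, List.sum_append,
                List.sum_cons] at hw ⊢
              omega
            · intro x hx
              simp only [List.mem_append, List.mem_cons] at hx
              rcases hx with hx | hx | hx
              · exact hg x (by simp [hx])
              · rw [hx]
                show W.mode e1.1.1 (i:ℤ) e2.1.1 ∈ W.grading _
                rw [htN]
                exact hb
              · exact hg x (by simp [hx])
      · have hch : (L.map (·.1.2)).Chain' (· ≤ ·) := by
          rcases adj_or_chain (fun x : (V × ℤ) × ℕ => x.1.2) L with ⟨p, x, y, t, heq, hyx⟩ | hch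
          · exact absurd ⟨p, x, y, t, heq, hyx⟩ hadj
          · exact hch
        rcases List.eq_nil_or_concat L with rfl | ⟨p, e, rfl⟩
        · exact Submodule.subset_span ⟨[], by simp, List.isChain_nil, by simp, rfl⟩
        · rw [List.concat_eq_append] at hch hallX ⊢
          by_cases hlast : 0 ≤ e.1.2
          · rw [valOf_decomp,
              show valOf W.toVertexAlg ([] : List ((V × ℤ) × ℕ)) = W.vac from rfl,
              W.creation_nonneg e.1.1 e.1.2 hlast, map_zero]
            exact Submodule.zero_mem _
          · push_neg at hlast
            apply Submodule.subset_span
            refine ⟨(p ++ [e]).map (·.1), ?_, ?_, ?_, ?_⟩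
            · intro pr hpr
              rw [List.mem_map] at hpr
              obtain ⟨ee, hee, rfl⟩ := hpr
              exact hallX ee hee
            · have hmm : (p ++ [e]).map (·.1.2) = ((p ++ [e]).map (·.1)).map (·.2) := by
                rw [List.map_map]
                rfl
              rw [hmm] at hch
              exact (List.isChain_map _).mp hch
            · intro pr hpr
              rw [List.mem_map] at hpr
              obtain ⟨ee, hee, rfl⟩ := hpr
              have hpw := List.isChain_iff_pairwise.mp hch
              rw [List.map_append, List.pairwise_append] at hpw
              obtain ⟨_, _, hcross⟩ := hpw
              rcases List.mem_append.mp hee with hee | hee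
              · have := hcross ee.1.2 (List.mem_map_of_mem (f := (·.1.2)) hee) e.1.2 (by simp)
                omega
              · simp only [List.mem_singleton] at hee
                rw [hee]
                exact hlast
            · exact opOf_apply_eq _ _ _

end Aux

/-- Index-ordered Karel–Li spanning set: `n₁ ≤ ⋯ ≤ nᵣ < 0` (difference-zero condition). -/
theorem stmt8 (W : VOA V) (X : Set V) (wt : V → ℤ)
    (hhom : ∀ u ∈ X, u ∈ W.grading (wt u))
    (hspan : Submodule.span ℂ ((C1space V W).mkQ '' X) = ⊤) :
    Submodule.span ℂ { x | ∃ L : List (V × ℤ),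
      (∀ p ∈ L, p.1 ∈ X) ∧
      L.Chain' (fun p q => p.2 ≤ q.2) ∧
      (∀ p ∈ L, p.2 < 0) ∧
      x = applyModes V W.toVertexAlg L W.vac } = (⊤ : Submodule ℂ V) := by
  have hhom' : ∀ u ∈ X, ∃ j : ℤ, u ∈ W.grading j := fun u hu => ⟨wt u, hhom u hu⟩
  have hTop := span_X_sup_C1 W X hspan
  rw [eq_top_iff]
  show (⊤ : Submodule ℂ V) ≤ Submodule.span ℂ (SSet W X)
  rw [← W.internal.submodule_iSup_eq_top]
  apply iSup_le
  intro j v hv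
  by_cases hj : j < 0
  · rw [W.neg_bot j hj] at hv
    rw [(Submodule.mem_bot ℂ).mp hv]
    exact Submodule.zero_mem _
  · push_neg at hj
    have hv' : v ∈ W.grading ((j.toNat : ℕ) : ℤ) := by
      rw [Int.toNat_of_nonneg hj]
      exact hv
    have hmain := main_span W X hhom' hTop (wtSum [((v, -1), j.toNat)])
      (sqSum [((v, -1), j.toNat)]) (cntX X [((v, -1), j.toNat)]) 1
      (invOf [((v, -1), j.toNat)]) [((v, -1), j.toNat)]
      (by
        intro e he
        simp only [List.mem_singleton] at he
        rw [he]
        exact hv')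
      le_rfl le_rfl le_rfl le_rfl le_rfl
    have hval : valOf W.toVertexAlg [((v, -1), j.toNat)] = v := by
      show W.mode v (-1) W.vac = v
      exact W.creation_neg_one v
    rwa [hval] at hmain

end VOAPaper
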